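/- Let j ∈ ℕ, α = 1/(2j+1), and let n ≥ 1 be an integer. Writing I_{m,m} = ∫_{−∞}^{∞} (H_m^α(x))² e^{−x^{2α}} |x|^{α−1} dx, one has the recurrence I_{n,n} = 2n · I_{n−1,n−1}. -/

import Mathlib

open MeasureTheory

open Real

/-- The physicists' Hermite polynomials, as real functions:
`H₀ = 1`, `H₁ x = 2 x`, `H_{m+1} x = 2 x * H_m x - 2 m * H_{m-1} x`. -/
noncomputable def hermiteP : ℕ → ℝ → ℝ
  | 0, _ => 1
  | 1, x => 2 * x
  | (m + 2), x => 2 * x * hermiteP (m + 1) x - 2 * ((m : ℝ) + 1) * hermiteP m x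

/-- The real `α`-th power for `α = 1/(2j+1)`, interpreted via the real odd root:
`sign x * |x| ^ α`. -/
noncomputable def oddRoot (α x : ℝ) : ℝ := Real.sign x * |x| ^ α

noncomputable def hermitePoly : ℕ → Polynomial ℝ
  | 0 => 1
  | 1 => Polynomial.C 2 * Polynomial.X
  | (m + 2) => Polynomial.C 2 * Polynomial.X * hermitePoly (m + 1)
      - Polynomial.C (2 * ((m : ℝ) + 1)) * hermitePoly m

theorem hermiteP_eval : ∀ (m : ℕ) (x : ℝ), hermiteP m x = (hermitePoly m).eval x
  | 0, x => by simp [hermiteP, hermitePoly]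
  | 1, x => by simp [hermiteP, hermitePoly]
  | (m + 2), x => by
      simp [hermiteP, hermitePoly, hermiteP_eval (m + 1) x, hermiteP_eval m x]

theorem hermiteP_succ (m : ℕ) (x : ℝ) :
    hermiteP (m + 1) x = 2 * x * hermiteP m x - 2 * (m : ℝ) * hermiteP (m - 1) x := by
  cases m with
  | zero => simp [hermiteP]
  | succ k =>
      show hermiteP (k + 2) x = _
      simp only [hermiteP, Nat.add_sub_cancel]
      push_cast
      ring

theorem hermiteP_hasDerivAt : ∀ (m : ℕ) (x : ℝ),
    HasDerivAt (hermiteP m) (2 * (m : ℝ) * hermiteP (m - 1) x) x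
  | 0, x => by
      have : (fun y => hermiteP 0 y) = fun _ => (1 : ℝ) := funext fun y => rfl
      simpa [this] using (hasDerivAt_const x (1 : ℝ))
  | 1, x => by
      have : (fun y => hermiteP 1 y) = fun y => 2 * y := funext fun y => rfl
      have h := ((hasDerivAt_id x).const_mul (2 : ℝ))
      simp only [this]
      simpa [hermiteP] using h
  | (m + 2), x => by
      have h1 := hermiteP_hasDerivAt (m + 1) x
      have h0 := hermiteP_hasDerivAt m x
      have hfun : (fun y => hermiteP (m + 2) y)
          = fun y => 2 * y * hermiteP (m + 1) y - 2 * ((m : ℝ) + 1) * hermiteP m y :=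
        funext fun y => rfl
      have hd := (((hasDerivAt_id x).const_mul (2 : ℝ)).mul h1).sub
        (h0.const_mul (2 * ((m : ℝ) + 1)))
      rw [show (m + 2 : ℕ) - 1 = m + 1 from rfl]
      show HasDerivAt (fun y => 2 * y * hermiteP (m + 1) y - 2 * ((m : ℝ) + 1) * hermiteP m y)
        (2 * ((m + 2 : ℕ) : ℝ) * hermiteP (m + 1) x) x
      convert hd using 1
      rotate_left 3
      have hs := hermiteP_succ m x
      rw [hs]
      simp only [id_eq, Nat.add_sub_cancel]
      push_cast
      ring
      all_goals rfl

theorem integrable_poly_gaussian (p : Polynomial ℝ) :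
    Integrable (fun x : ℝ => p.eval x * Real.exp (-x ^ 2)) := by
  induction p using Polynomial.induction_on' with
  | add p q hp hq => simpa [add_mul] using hp.fun_add hq
  | monomial n a =>
      have h := (integrable_rpow_mul_exp_neg_mul_sq (b := 1) one_pos
        (s := (n : ℝ)) (lt_of_lt_of_le (by norm_num) (Nat.cast_nonneg n))).const_mul a
      refine h.congr ?_
      filter_upwards with x
      simp [Polynomial.eval_monomial, Real.rpow_natCast]
      ring_nf

open Real

theorem integrable_aux (p : Polynomial ℝ) (F : ℝ → ℝ)
    (hF : ∀ x, F x = p.eval x * Real.exp (-x ^ 2)) : Integrable F := by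
  have : F = fun x => p.eval x * Real.exp (-x ^ 2) := funext hF
  rw [this]; exact integrable_poly_gaussian p

theorem J_rec (m : ℕ) :
    ∫ x : ℝ, hermiteP (m + 1) x ^ 2 * Real.exp (-x ^ 2)
      = 2 * ((m : ℝ) + 1) * ∫ x : ℝ, hermiteP m x ^ 2 * Real.exp (-x ^ 2) := by
  set A : ℝ → ℝ := hermiteP (m + 1) with hA
  set B : ℝ → ℝ := hermiteP m with hB
  set C : ℝ → ℝ := hermiteP (m - 1) with hC
  -- integrable pieces
  have intP1 : Integrable (fun x : ℝ => B x ^ 2 * Real.exp (-x ^ 2)) :=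
    integrable_aux ((hermitePoly m) ^ 2) _ (fun x => by simp [hB, hermiteP_eval])
  have intP2 : Integrable (fun x : ℝ => A x * C x * Real.exp (-x ^ 2)) :=
    integrable_aux ((hermitePoly (m + 1)) * (hermitePoly (m - 1))) _
      (fun x => by simp [hA, hC, hermiteP_eval])
  have intP3 : Integrable (fun x : ℝ => x * (A x * B x) * Real.exp (-x ^ 2)) :=
    integrable_aux (Polynomial.X * ((hermitePoly (m + 1)) * (hermitePoly m))) _
      (fun x => by simp [hA, hB, hermiteP_eval])
  have intJ1 : Integrable (fun x : ℝ => A x ^ 2 * Real.exp (-x ^ 2)) :=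
    integrable_aux ((hermitePoly (m + 1)) ^ 2) _ (fun x => by simp [hA, hermiteP_eval])
  -- derivative of Φ
  have hderiv : ∀ x : ℝ, HasDerivAt (fun y => A y * B y * Real.exp (-y ^ 2))
      ((2 * ((m : ℝ) + 1) * B x * B x + A x * (2 * (m : ℝ) * C x)) * Real.exp (-x ^ 2)
        + A x * B x * (Real.exp (-x ^ 2) * (-(2 * x)))) x := by
    intro x
    have hDA : HasDerivAt A (2 * ((m : ℝ) + 1) * B x) x := by
      have := hermiteP_hasDerivAt (m + 1) x
      simpa [hA, hB, Nat.add_sub_cancel] using (by push_cast at this ⊢; exact this)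
    have hDB : HasDerivAt B (2 * (m : ℝ) * C x) x := hermiteP_hasDerivAt m x
    have hE : HasDerivAt (fun y : ℝ => Real.exp (-y ^ 2)) (Real.exp (-x ^ 2) * (-(2 * x))) x := by
      have h1 : HasDerivAt (fun y : ℝ => -y ^ 2) (-(2 * x)) x := by
        simpa using (hasDerivAt_pow 2 x).fun_neg
      simpa using h1.exp
    exact (hDA.mul hDB).mul hE
  have hΦint : Integrable (fun x : ℝ => A x * B x * Real.exp (-x ^ 2)) :=
    integrable_aux ((hermitePoly (m + 1)) * (hermitePoly m)) _
      (fun x => by simp [hA, hB, hermiteP_eval])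
  have hφint : Integrable (fun x : ℝ =>
      (2 * ((m : ℝ) + 1) * B x * B x + A x * (2 * (m : ℝ) * C x)) * Real.exp (-x ^ 2)
        + A x * B x * (Real.exp (-x ^ 2) * (-(2 * x)))) :=
    integrable_aux (Polynomial.C (2 * ((m : ℝ) + 1)) * (hermitePoly m) * (hermitePoly m)
        + Polynomial.C (2 * (m : ℝ)) * (hermitePoly (m + 1)) * (hermitePoly (m - 1))
        - Polynomial.C 2 * Polynomial.X * ((hermitePoly (m + 1)) * (hermitePoly m))) _
      (fun x => by simp [hA, hB, hC, hermiteP_eval]; ring)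
  have hzero : (∫ x : ℝ,
      ((2 * ((m : ℝ) + 1) * B x * B x + A x * (2 * (m : ℝ) * C x)) * Real.exp (-x ^ 2)
        + A x * B x * (Real.exp (-x ^ 2) * (-(2 * x))))) = 0 :=
    integral_eq_zero_of_hasDerivAt_of_integrable hderiv hφint hΦint
  -- split hzero
  have hsplit : (∫ x : ℝ,
      ((2 * ((m : ℝ) + 1) * B x * B x + A x * (2 * (m : ℝ) * C x)) * Real.exp (-x ^ 2)
        + A x * B x * (Real.exp (-x ^ 2) * (-(2 * x)))))
      = 2 * ((m : ℝ) + 1) * (∫ x : ℝ, B x ^ 2 * Real.exp (-x ^ 2))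
        + 2 * (m : ℝ) * (∫ x : ℝ, A x * C x * Real.exp (-x ^ 2))
        - 2 * (∫ x : ℝ, x * (A x * B x) * Real.exp (-x ^ 2)) := by
    rw [show (fun x : ℝ =>
        ((2 * ((m : ℝ) + 1) * B x * B x + A x * (2 * (m : ℝ) * C x)) * Real.exp (-x ^ 2)
        + A x * B x * (Real.exp (-x ^ 2) * (-(2 * x)))))
      = fun x : ℝ => (2 * ((m : ℝ) + 1) * (B x ^ 2 * Real.exp (-x ^ 2))
          + 2 * (m : ℝ) * (A x * C x * Real.exp (-x ^ 2)))
          - 2 * (x * (A x * B x) * Real.exp (-x ^ 2)) from funext fun x => by ring]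
    have int12 : Integrable (fun x : ℝ => 2 * ((m : ℝ) + 1) * (B x ^ 2 * Real.exp (-x ^ 2))
        + 2 * (m : ℝ) * (A x * C x * Real.exp (-x ^ 2))) := by
      exact (intP1.const_mul _).add (intP2.const_mul _)
    have int3 : Integrable (fun x : ℝ => 2 * (x * (A x * B x) * Real.exp (-x ^ 2))) := by
      exact intP3.const_mul _
    rw [integral_sub int12 int3, integral_add (intP1.const_mul _) (intP2.const_mul _)]
    simp only [integral_const_mul]
  -- expand J (m+1)
  have hexp : (∫ x : ℝ, A x ^ 2 * Real.exp (-x ^ 2))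
      = 2 * (∫ x : ℝ, x * (A x * B x) * Real.exp (-x ^ 2))
        - 2 * (m : ℝ) * (∫ x : ℝ, A x * C x * Real.exp (-x ^ 2)) := by
    rw [show (fun x : ℝ => A x ^ 2 * Real.exp (-x ^ 2))
      = fun x : ℝ => 2 * (x * (A x * B x) * Real.exp (-x ^ 2))
          - 2 * (m : ℝ) * (A x * C x * Real.exp (-x ^ 2)) from funext fun x => by
        have hs : A x = 2 * x * B x - 2 * (m : ℝ) * C x := hermiteP_succ m x
        rw [pow_two, hs]; ring]
    have int3 : Integrable (fun x : ℝ => 2 * (x * (A x * B x) * Real.exp (-x ^ 2))) := by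
      exact intP3.const_mul _
    have int2 : Integrable (fun x : ℝ => 2 * (m : ℝ) * (A x * C x * Real.exp (-x ^ 2))) := by
      exact intP2.const_mul _
    rw [integral_sub int3 int2]
    simp only [integral_const_mul]
  rw [hsplit] at hzero
  rw [hexp]
  linarith [hzero]

theorem key_Ioi {α : ℝ} (hα : 0 < α) {h : ℝ → ℝ} (hh : Integrable h) :
    IntegrableOn (fun x : ℝ => x ^ (α - 1) * h (x ^ α)) (Set.Ioi 0) ∧
      ∫ x in Set.Ioi (0:ℝ), x ^ (α - 1) * h (x ^ α) = α⁻¹ * ∫ u in Set.Ioi (0:ℝ), h u := by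
  have hsm : (fun x : ℝ => x ^ (α - 1) * h (x ^ α)) = fun x : ℝ => x ^ (α - 1) • h (x ^ α) := by
    funext x; rw [smul_eq_mul]
  constructor
  · rw [hsm]; exact (integrableOn_Ioi_comp_rpow_iff' h hα.ne').mpr hh.integrableOn
  · have h2 := integral_comp_rpow_Ioi h hα.ne'
    rw [abs_of_pos hα] at h2
    have h3 : ∫ x in Set.Ioi (0:ℝ), (α * x ^ (α - 1)) • h (x ^ α)
        = α * ∫ x in Set.Ioi (0:ℝ), x ^ (α - 1) • h (x ^ α) := by
      simp_rw [mul_smul]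
      rw [integral_smul, smul_eq_mul]
    rw [h3] at h2
    rw [hsm]
    field_simp at h2 ⊢
    linarith [h2]

theorem I_eq {α : ℝ} (hα : 0 < α) (m : ℕ) :
    ∫ x : ℝ, (hermiteP m (oddRoot α x)) ^ 2 * Real.exp (-(|x| ^ (2 * α))) * |x| ^ (α - 1)
      = α⁻¹ * ∫ u : ℝ, hermiteP m u ^ 2 * Real.exp (-u ^ 2) := by
  set f : ℝ → ℝ := fun x =>
    (hermiteP m (oddRoot α x)) ^ 2 * Real.exp (-(|x| ^ (2 * α))) * |x| ^ (α - 1) with hf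
  set g : ℝ → ℝ := fun u => hermiteP m u ^ 2 * Real.exp (-u ^ 2) with hg
  set g1 : ℝ → ℝ := fun u => hermiteP m (-u) ^ 2 * Real.exp (-u ^ 2) with hg1
  have hgint : Integrable g :=
    integrable_aux ((hermitePoly m) ^ 2) _ (fun x => by simp [hg, hermiteP_eval])
  have hg1int : Integrable g1 :=
    integrable_aux (((hermitePoly m).comp (-Polynomial.X)) ^ 2) _
      (fun x => by simp [hg1, hermiteP_eval])
  have hg1g : (fun x : ℝ => g (-x)) = g1 := by
    funext x; simp [hg, hg1, neg_sq]
  -- pointwise identities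
  have hpos : ∀ x ∈ Set.Ioi (0:ℝ), f x = x ^ (α - 1) * g (x ^ α) := by
    intro x hx
    have hx0 : (0:ℝ) < x := hx
    have hpow : x ^ (2 * α) = (x ^ α) ^ 2 := by
      rw [mul_comm, Real.rpow_mul hx0.le, Real.rpow_two]
    simp only [hf, hg, oddRoot, Real.sign_of_pos hx0, abs_of_pos hx0, one_mul, hpow]
    ring
  have hneg : ∀ x ∈ Set.Ioi (0:ℝ), f (-x) = x ^ (α - 1) * g1 (x ^ α) := by
    intro x hx
    have hx0 : (0:ℝ) < x := hx
    have hpow : x ^ (2 * α) = (x ^ α) ^ 2 := by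
      rw [mul_comm, Real.rpow_mul hx0.le, Real.rpow_two]
    simp only [hf, hg1, oddRoot, Real.sign_of_neg (neg_lt_zero.mpr hx0), abs_neg,
      abs_of_pos hx0, hpow, neg_one_mul]
    ring
  have key_g := key_Ioi hα hgint
  have key_g1 := key_Ioi hα hg1int
  have hIoi_f : IntegrableOn f (Set.Ioi 0) :=
    key_g.1.congr_fun (fun x hx => (hpos x hx).symm) measurableSet_Ioi
  have hIoi_fval : ∫ x in Set.Ioi (0:ℝ), f x = α⁻¹ * ∫ u in Set.Ioi (0:ℝ), g u := by
    rw [setIntegral_congr_fun measurableSet_Ioi hpos]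
    exact key_g.2
  have hfneg : IntegrableOn (fun x => f (-x)) (Set.Ioi 0) :=
    key_g1.1.congr_fun (fun x hx => (hneg x hx).symm) measurableSet_Ioi
  have hIic_f : IntegrableOn f (Set.Iic 0) := by
    rw [← Measure.map_neg_eq_self (volume : Measure ℝ)]
    have me : MeasurableEmbedding fun x : ℝ => -x :=
      (Homeomorph.neg ℝ).measurableEmbedding
    rw [me.integrableOn_map_iff]
    simp_rw [Function.comp_def, Set.neg_preimage, Set.neg_Iic, neg_zero]
    rw [integrableOn_Ici_iff_integrableOn_Ioi]
    exact hfneg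
  have hIic_fval : ∫ x in Set.Iic (0:ℝ), f x = α⁻¹ * ∫ u in Set.Ioi (0:ℝ), g1 u := by
    have hcomp := integral_comp_neg_Iic (0:ℝ) (fun x => f (-x))
    simp only [neg_neg, neg_zero] at hcomp
    rw [hcomp, setIntegral_congr_fun measurableSet_Ioi hneg]
    exact key_g1.2
  have hfint : Integrable f := by
    rw [← integrableOn_univ, ← Set.Iic_union_Ioi (a := (0:ℝ))]
    exact integrableOn_union.mpr ⟨hIic_f, hIoi_f⟩
  have split : ∀ (F : ℝ → ℝ), Integrable F →
      (∫ x : ℝ, F x) = (∫ x in Set.Iic (0:ℝ), F x) + ∫ x in Set.Ioi (0:ℝ), F x := by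
    intro F hF
    rw [← setIntegral_union (Set.Iic_disjoint_Ioi le_rfl) measurableSet_Ioi
      hF.integrableOn hF.integrableOn, Set.Iic_union_Ioi, setIntegral_univ]
  have hgIic : ∫ u in Set.Iic (0:ℝ), g u = ∫ u in Set.Ioi (0:ℝ), g1 u := by
    have hcomp := integral_comp_neg_Iic (0:ℝ) (fun x => g (-x))
    simp only [neg_neg, neg_zero] at hcomp
    rw [hcomp]
    exact congrArg _ hg1g
  rw [split f hfint, split g hgint, hIic_fval, hIoi_fval, hgIic, mul_add]

theorem stmt_17 (j : ℕ) (α : ℝ) (hα : α = 1 / (2 * (j : ℝ) + 1)) (n : ℕ) (hn : 1 ≤ n)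
    (I : ℕ → ℝ)
    (hI : ∀ m : ℕ, I m = ∫ x : ℝ, (hermiteP m (oddRoot α x)) ^ 2 *
        Real.exp (-(|x| ^ (2 * α))) * |x| ^ (α - 1)) :
    I n = 2 * (n : ℝ) * I (n - 1) := by
  have hαpos : 0 < α := by rw [hα]; positivity
  obtain ⟨k, rfl⟩ : ∃ k, n = k + 1 := ⟨n - 1, (Nat.succ_pred_eq_of_pos hn).symm⟩
  rw [hI, hI, I_eq hαpos, I_eq hαpos]
  simp only [Nat.add_sub_cancel]
  rw [J_rec k]
  push_cast
  ring
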